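/- For every q ∈ (1/2, 1): -(1-q) log(1-q)/q + q log q/(1-q) + q - (1-q) > 0. -/

import Mathlib

open Real

/-- K(x) = x³/(1-x) + 2 log(1-x) + 2x + x², with K' = x²/(1-x)². -/
lemma K_hasDerivAt (x : ℝ) (hx1 : x < 1) :
    HasDerivAt (fun x : ℝ => x^3/(1-x) + 2*Real.log (1-x) + 2*x + x^2)
      (x^2/(1-x)^2) x := by
  have h1 : (1:ℝ) - x ≠ 0 := by linarith
  have h3 : HasDerivAt (fun x:ℝ => x^3) (3*x^2) x := by
    simpa using (hasDerivAt_pow 3 x)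
  have h1x : HasDerivAt (fun x:ℝ => 1 - x) (-1) x := by
    simpa using (hasDerivAt_id x).const_sub 1
  have hlog : HasDerivAt (fun x:ℝ => Real.log (1-x)) (-1/(1-x)) x := by
    have := h1x.log h1
    simpa using this
  have hsq : HasDerivAt (fun x:ℝ => x^2) (2*x) x := by
    simpa using (hasDerivAt_pow 2 x)
  have hall := (((h3.div h1x h1).add (hlog.const_mul 2)).add
      ((hasDerivAt_id x).const_mul 2)).add hsq
  simp only [id_eq] at hall
  refine hall.congr_deriv ?_
  field_simp
  ring

lemma K_pos (x : ℝ) (hx0 : 0 < x) (hx1 : x < 1) :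
    0 < x^3/(1-x) + 2*Real.log (1-x) + 2*x + x^2 := by
  have hmono : StrictMonoOn (fun x : ℝ => x^3/(1-x) + 2*Real.log (1-x) + 2*x + x^2)
      (Set.Ico (0:ℝ) 1) := by
    apply strictMonoOn_of_deriv_pos (convex_Ico 0 1)
    · have hne : ∀ y ∈ Set.Ico (0:ℝ) 1, (1:ℝ) - y ≠ 0 := by
        intro y hy
        simp only [Set.mem_Ico] at hy
        intro h; linarith [hy.2]
      refine (((ContinuousOn.div (by fun_prop) (by fun_prop) hne).add
        (continuousOn_const.mul (ContinuousOn.log (by fun_prop) hne))).add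
        (by fun_prop)).add (by fun_prop)
    · intro y hy
      rw [interior_Ico] at hy
      obtain ⟨hy1, hy2⟩ := hy
      rw [(K_hasDerivAt y hy2).deriv]
      have h1y : (0:ℝ) < 1 - y := by linarith
      positivity
  have h := hmono (Set.mem_Ico.2 ⟨le_refl 0, one_pos⟩)
    (Set.mem_Ico.2 ⟨hx0.le, hx1⟩) hx0
  simpa using h

/-- H(x) = (-log(1-x) - x - x²/2)/x², with H' = K(x)/x³. -/
lemma H_hasDerivAt (x : ℝ) (hx0 : 0 < x) (hx1 : x < 1) :
    HasDerivAt (fun x : ℝ => (-Real.log (1-x) - x - x^2/2)/x^2)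
      ((x^3/(1-x) + 2*Real.log (1-x) + 2*x + x^2)/x^3) x := by
  have h1 : (1:ℝ) - x ≠ 0 := by linarith
  have hx : x ≠ 0 := ne_of_gt hx0
  have h1x : HasDerivAt (fun x:ℝ => 1 - x) (-1) x := by
    simpa using (hasDerivAt_id x).const_sub 1
  have hlog : HasDerivAt (fun x:ℝ => Real.log (1-x)) (-1/(1-x)) x := by
    have := h1x.log h1
    simpa using this
  have hnum : HasDerivAt (fun x : ℝ => -Real.log (1-x) - x - x^2/2)
      (-(-1/(1-x)) - 1 - (2*x)/2) x := by
    have hsq : HasDerivAt (fun x:ℝ => x^2/2) ((2*x)/2) x := by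
      simpa using (hasDerivAt_pow 2 x).div_const 2
    exact (hlog.neg.sub (hasDerivAt_id x)).sub hsq
  have hden : HasDerivAt (fun x:ℝ => x^2) (2*x) x := by
    simpa using (hasDerivAt_pow 2 x)
  have hx2 : (x:ℝ)^2 ≠ 0 := pow_ne_zero 2 hx
  have hall := hnum.div hden hx2
  refine hall.congr_deriv ?_
  field_simp
  ring

theorem binary_underconfidence_gamma_zero_part (q : ℝ)
    (hq : q ∈ Set.Ioo (1/2 : ℝ) 1) :
    0 < -(1 - q) * Real.log (1 - q) / q + q * Real.log q / (1 - q)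
        + q - (1 - q) := by
  obtain ⟨hq1, hq2⟩ := hq
  set p : ℝ := 1 - q with hp
  have hp0 : 0 < p := by simp only [hp]; linarith
  have hp1 : p < 1 := by simp only [hp]; linarith
  have hq0 : 0 < q := by linarith
  have hpq : p < q := by simp only [hp]; linarith
  have hmono : StrictMonoOn (fun x : ℝ => (-Real.log (1-x) - x - x^2/2)/x^2)
      (Set.Ioo (0:ℝ) 1) := by
    apply strictMonoOn_of_deriv_pos (convex_Ioo 0 1)
    · intro y hy
      simp only [Set.mem_Ioo] at hy
      exact ((H_hasDerivAt y hy.1 hy.2).continuousAt).continuousWithinAt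
    · intro y hy
      rw [interior_Ioo] at hy
      obtain ⟨hy1, hy2⟩ := hy
      rw [(H_hasDerivAt y hy1 hy2).deriv]
      exact div_pos (K_pos y hy1 hy2) (by positivity)
  have hlt := hmono (Set.mem_Ioo.2 ⟨hp0, hp1⟩) (Set.mem_Ioo.2 ⟨by linarith, hq2⟩) hpq
  simp only at hlt
  rw [show (1:ℝ) - p = q by simp [hp]] at hlt
  rw [← hp] at hlt
  have key : q^2 * (-Real.log q - p - p^2/2) < p^2 * (-Real.log p - q - q^2/2) := by
    rw [div_lt_div_iff₀ (pow_pos hp0 2) (pow_pos hq0 2)] at hlt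
    linarith
  have hexpr : -p * Real.log p / q + q * Real.log q / p + q - p
      = (p^2 * (-Real.log p - q - q^2/2) - q^2 * (-Real.log q - p - p^2/2)) / (p*q) := by
    field_simp
    ring
  rw [hexpr]
  exact div_pos (by linarith) (mul_pos hp0 hq0)
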